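/- Let χ be a nonzero complex number. In ℂ[z₁,z₂], the intersection of the ideal generated by z₁ and z₂ with the ideal generated by z₁ + 1/χ and z₂ − 1 equals the ideal generated by z₁ + z₂/χ and z₂² − z₂. -/
import Mathlib


open MvPolynomial

/-- In `ℂ[z₁,z₂]` (with `χ ≠ 0`), the intersection of the ideal `⟨z₁, z₂⟩` with the
ideal `⟨z₁ + 1/χ, z₂ − 1⟩` equals the ideal `⟨z₁ + z₂/χ, z₂² − z₂⟩`. -/
theorem inf_vanishing_ideals_eq (χ : ℂ) (hχ : χ ≠ 0) :
    Ideal.span ({X 0, X 1} : Set (MvPolynomial (Fin 2) ℂ)) ⊓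
      Ideal.span ({X 0 + C (1 / χ), X 1 - 1} : Set (MvPolynomial (Fin 2) ℂ)) =
    Ideal.span ({X 0 + C (1 / χ) * X 1, (X 1) ^ 2 - X 1} :
      Set (MvPolynomial (Fin 2) ℂ)) := by
  set x : MvPolynomial (Fin 2) ℂ := X 0
  set y : MvPolynomial (Fin 2) ℂ := X 1
  set c : MvPolynomial (Fin 2) ℂ := C (1 / χ)
  -- the two ideals are comaximal
  have hco : Ideal.span ({x, y} : Set (MvPolynomial (Fin 2) ℂ)) ⊔
      Ideal.span ({x + c, y - 1} : Set (MvPolynomial (Fin 2) ℂ)) = ⊤ := by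
    rw [Ideal.eq_top_iff_one]
    refine Submodule.mem_sup.2 ⟨y, ?_, -(y - 1), ?_, by ring⟩
    · exact Ideal.subset_span (by simp)
    · exact neg_mem (Ideal.subset_span (by simp))
  rw [← Ideal.mul_eq_inf_of_coprime hco]
  have hprod : Ideal.span ({x, y} : Set (MvPolynomial (Fin 2) ℂ)) *
      Ideal.span ({x + c, y - 1} : Set (MvPolynomial (Fin 2) ℂ)) =
      Ideal.span ({x * (x + c), x * (y - 1), y * (x + c), y * (y - 1)} :
        Set (MvPolynomial (Fin 2) ℂ)) := Ideal.span_pair_mul_span_pair _ _ _ _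
  rw [hprod]
  apply le_antisymm
  · rw [Ideal.span_le]
    intro p hp
    set J := Ideal.span ({x + c * y, y ^ 2 - y} : Set (MvPolynomial (Fin 2) ℂ))
    have ha : x + c * y ∈ J := Ideal.subset_span (by simp)
    have hb : y ^ 2 - y ∈ J := Ideal.subset_span (by simp)
    simp only [Set.mem_insert_iff, Set.mem_singleton_iff] at hp
    rcases hp with h | h | h | h <;> subst h
    · have : x * (x + c) = (x - c * (y - 1)) * (x + c * y) + (c * c) * (y ^ 2 - y) := by
        ring
      rw [this]
      exact J.add_mem (J.mul_mem_left _ ha) (J.mul_mem_left _ hb)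
    · have : x * (y - 1) = (y - 1) * (x + c * y) + (-c) * (y ^ 2 - y) := by ring
      rw [this]
      exact J.add_mem (J.mul_mem_left _ ha) (J.mul_mem_left _ hb)
    · have : y * (x + c) = y * (x + c * y) + (-c) * (y ^ 2 - y) := by ring
      rw [this]
      exact J.add_mem (J.mul_mem_left _ ha) (J.mul_mem_left _ hb)
    · have : y * (y - 1) = (1 : MvPolynomial (Fin 2) ℂ) * (y ^ 2 - y) := by ring
      rw [this]
      exact J.mul_mem_left _ hb
  · rw [Ideal.span_le]
    intro p hp
    set K := Ideal.span ({x * (x + c), x * (y - 1), y * (x + c), y * (y - 1)} :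
      Set (MvPolynomial (Fin 2) ℂ))
    have h2 : x * (y - 1) ∈ K := Ideal.subset_span (by simp)
    have h3 : y * (x + c) ∈ K := Ideal.subset_span (by simp)
    have h4 : y * (y - 1) ∈ K := Ideal.subset_span (by simp)
    simp only [Set.mem_insert_iff, Set.mem_singleton_iff] at hp
    rcases hp with h | h <;> subst h
    · have : x + c * y = (1 : MvPolynomial (Fin 2) ℂ) * (y * (x + c)) +
          (-1 : MvPolynomial (Fin 2) ℂ) * (x * (y - 1)) := by ring
      rw [this]
      exact K.add_mem (K.mul_mem_left _ h3) (K.mul_mem_left _ h2)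
    · have : y ^ 2 - y = (1 : MvPolynomial (Fin 2) ℂ) * (y * (y - 1)) := by ring
      rw [this]
      exact K.mul_mem_left _ h4
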